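/- Let α, β be real numbers with α ≥ β ≥ -1/2, and for each natural number ℓ define N_ℓ = (2ℓ + α + β + 1) Γ(β+1) Γ(ℓ+α+β+1) Γ(ℓ+α+1) / (Γ(α+1) Γ(α+β+2) Γ(ℓ+1) Γ(ℓ+β+1)) and λ_ℓ = -ℓ(ℓ+α+β+1). Then for a real number p ≥ 0, the series ∑_{ℓ=0}^∞ N_ℓ · (1 - λ_ℓ)^{-p} = ∑_{ℓ=0}^∞ N_ℓ / (1 + ℓ(ℓ+α+β+1))^p converges if and only if p > α + 1. Equivalently, with d = 2α + 2, the Sobolev space ℋ_p(𝕄^d) is a reproducing kernel Hilbert space if and only if p > d/2. -/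

import Mathlib

open Filter Topology Asymptotics

/-- `Γ(s+n) = (∏_{j<n} (s+j)) Γ(s)` when no `s+j` is zero. -/
lemma gamma_add_nat (s : ℝ) (hs : ∀ j : ℕ, s + j ≠ 0) (n : ℕ) :
    Real.Gamma (s + n) = (∏ j ∈ Finset.range n, (s + j)) * Real.Gamma s := by
  induction n with
  | zero => simp
  | succ n ih =>
    have h : (s + (n + 1 : ℕ) : ℝ) = (s + n) + 1 := by push_cast; ring
    rw [h, Real.Gamma_add_one (hs n), Finset.prod_range_succ, ih]
    ring

/-- Gamma ratio asymptotics: `Γ(n+s+1)/(Γ(n+1) n^s) → 1`. -/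
lemma gammaRatio_tendsto {s : ℝ} (hs : -1 ≤ s) :
    Tendsto (fun n : ℕ => Real.Gamma (n + s + 1) / (Real.Gamma (n + 1) * (n : ℝ) ^ s))
      atTop (𝓝 1) := by
  rcases eq_or_lt_of_le hs with rfl | hs1
  · apply Tendsto.congr' _ (tendsto_const_nhds (x := (1:ℝ)))
    filter_upwards [eventually_ge_atTop 1] with n hn
    have hn0 : (0:ℝ) < n := by exact_mod_cast hn
    have h1 : Real.Gamma ((n:ℝ) + 1) = n * Real.Gamma n := by
      rw [Real.Gamma_add_one (ne_of_gt hn0)]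
    have h2 : ((n:ℝ) + -1 + 1) = n := by ring
    have hg : 0 < Real.Gamma (n:ℝ) := Real.Gamma_pos_of_pos hn0
    rw [h2, h1, Real.rpow_neg_one]
    field_simp
  rcases eq_or_ne s 0 with rfl | hs0
  · apply Tendsto.congr' _ (tendsto_const_nhds (x := (1:ℝ)))
    filter_upwards [eventually_ge_atTop 1] with n hn
    have hn0 : (0:ℝ) < (n:ℝ) + 1 := by positivity
    have hg : 0 < Real.Gamma ((n:ℝ) + 1) := Real.Gamma_pos_of_pos hn0
    rw [Real.rpow_zero, add_zero, mul_one, div_self (ne_of_gt hg)]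
  · have hΓ : Real.Gamma s ≠ 0 := by
      apply Real.Gamma_ne_zero
      intro m
      cases m with
      | zero => simpa using hs0
      | succ k =>
        intro h
        have : (0:ℝ) ≤ (k:ℝ) := Nat.cast_nonneg k
        rw [h] at hs1
        push_cast at hs1
        linarith
    have key := Real.GammaSeq_tendsto_Gamma s
    have h2 : Tendsto (fun n => Real.Gamma s / Real.GammaSeq s n) atTop
        (𝓝 (Real.Gamma s / Real.Gamma s)) := tendsto_const_nhds.div key hΓ
    rw [div_self hΓ] at h2
    apply Tendsto.congr' _ h2
    filter_upwards [eventually_ge_atTop 1] with n hn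
    have hn0 : (0:ℝ) < n := by exact_mod_cast hn
    have hsj : ∀ j : ℕ, s + j ≠ 0 := by
      intro j
      cases j with
      | zero => simpa using hs0
      | succ k =>
        have : (0:ℝ) ≤ (k:ℝ) := Nat.cast_nonneg k
        push_cast
        intro hcon
        linarith
    have hP : (∏ j ∈ Finset.range (n + 1), (s + j)) ≠ 0 :=
      Finset.prod_ne_zero_iff.mpr fun j _ => hsj j
    have hG : Real.Gamma ((n:ℝ) + s + 1)
        = (∏ j ∈ Finset.range (n + 1), (s + j)) * Real.Gamma s := by
      have := gamma_add_nat s hsj (n + 1)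
      rw [← this]; congr 1; push_cast; ring
    have hfac : Real.Gamma ((n:ℝ) + 1) = (n.factorial : ℝ) := by
      exact_mod_cast Real.Gamma_nat_eq_factorial n
    have hns : ((n:ℝ)) ^ s ≠ 0 := ne_of_gt (Real.rpow_pos_of_pos hn0 s)
    have hfac0 : (n.factorial : ℝ) ≠ 0 := by positivity
    rw [Real.GammaSeq, hG, hfac]
    field_simp

/-- Transfer: if `f ℓ / ℓ^r → L > 0` then `Summable f ↔ r < -1`. -/
lemma summable_iff_of_div_rpow_tendsto {f : ℕ → ℝ} {r L : ℝ} (hL : 0 < L)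
    (hT : Tendsto (fun ℓ : ℕ => f ℓ / (ℓ : ℝ) ^ r) atTop (𝓝 L)) :
    Summable f ↔ r < -1 := by
  have hg : ∀ᶠ ℓ : ℕ in atTop, (0:ℝ) < (ℓ:ℝ) ^ r := by
    filter_upwards [eventually_ge_atTop 1] with n hn
    exact Real.rpow_pos_of_pos (by exact_mod_cast hn) r
  have hfpos : ∀ᶠ ℓ : ℕ in atTop, 0 < f ℓ := by
    have h1 : ∀ᶠ ℓ in atTop, L/2 < f ℓ / (ℓ:ℝ) ^ r :=
      hT.eventually (eventually_gt_nhds (by linarith))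
    filter_upwards [h1, hg] with n h1 h2
    have h3 : (0:ℝ) < f n / (n:ℝ) ^ r := lt_trans (by linarith) h1
    have := mul_pos h3 h2
    rwa [div_mul_cancel₀ _ (ne_of_gt h2)] at this
  constructor
  · intro hf
    have hO : (fun ℓ : ℕ => (ℓ:ℝ) ^ r) =O[atTop] f := by
      refine isBigO_of_div_tendsto_nhds ?_ L⁻¹ ?_
      · filter_upwards [hfpos] with n hn h
        exact absurd h (ne_of_gt hn)
      · have h2 := hT.inv₀ (ne_of_gt hL)
        exact h2.congr fun n => by simp [Pi.div_apply, inv_div]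
    exact Real.summable_nat_rpow.mp (summable_of_isBigO_nat hf hO)
  · intro hr
    have hsum : Summable (fun ℓ : ℕ => (ℓ:ℝ) ^ r) := Real.summable_nat_rpow.mpr hr
    have hO : f =O[atTop] fun ℓ : ℕ => (ℓ:ℝ) ^ r := by
      refine isBigO_of_div_tendsto_nhds ?_ L ?_
      · filter_upwards [hg] with n hn h
        exact absurd h (ne_of_gt hn)
      · exact hT.congr fun n => rfl
    exact summable_of_isBigO_nat hsum hO

/-- For `α ≥ β ≥ -1/2` and `p ≥ 0`, the series
`∑_ℓ N ℓ / (1 + ℓ(ℓ+α+β+1))^p` converges if and only if `p > α + 1`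
(the RKHS criterion for the Sobolev space `ℋ_p(𝕄^d)` with `d = 2α+2`). -/
theorem sobolev_RKHS_criterion
    (α β : ℝ) (hβ : -1/2 ≤ β) (hαβ : β ≤ α)
    (N : ℕ → ℝ)
    (hN : ∀ ℓ : ℕ, N ℓ =
      (2 * ℓ + α + β + 1) * Real.Gamma (β + 1) * Real.Gamma (ℓ + α + β + 1) *
        Real.Gamma (ℓ + α + 1) /
      (Real.Gamma (α + 1) * Real.Gamma (α + β + 2) * Real.Gamma (ℓ + 1) *
        Real.Gamma (ℓ + β + 1)))
    (p : ℝ) (hp : 0 ≤ p) :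
    Summable (fun ℓ : ℕ => N ℓ / (1 + ℓ * (ℓ + α + β + 1)) ^ p) ↔ α + 1 < p := by
  have hα : -1/2 ≤ α := le_trans hβ hαβ
  have hq : (0:ℝ) ≤ α + β + 1 := by linarith
  have hΓβ : 0 < Real.Gamma (β + 1) := Real.Gamma_pos_of_pos (by linarith)
  have hΓα : 0 < Real.Gamma (α + 1) := Real.Gamma_pos_of_pos (by linarith)
  have hΓαβ : 0 < Real.Gamma (α + β + 2) := Real.Gamma_pos_of_pos (by linarith)
  set C0 : ℝ := Real.Gamma (β + 1) / (Real.Gamma (α + 1) * Real.Gamma (α + β + 2)) with hC0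
  have hC0pos : 0 < C0 := by positivity
  set r : ℝ := 2 * α + 1 - 2 * p with hr
  -- basic limits
  have h0 : Tendsto (fun ℓ : ℕ => ((ℓ:ℝ))⁻¹) atTop (𝓝 0) :=
    tendsto_inv_atTop_zero.comp tendsto_natCast_atTop_atTop
  have hF : Tendsto (fun ℓ : ℕ => (2 * ℓ + (α + β + 1)) / (ℓ:ℝ)) atTop (𝓝 2) := by
    have h1 : Tendsto (fun ℓ : ℕ => 2 + (α + β + 1) * ((ℓ:ℝ))⁻¹) atTop (𝓝 (2 + (α+β+1) * 0)) :=
      tendsto_const_nhds.add (h0.const_mul _)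
    rw [mul_zero, add_zero] at h1
    apply h1.congr'
    filter_upwards [eventually_ge_atTop 1] with n hn
    have hn0 : (0:ℝ) < n := by exact_mod_cast hn
    field_simp
  have hE : Tendsto (fun ℓ : ℕ => (1 + ℓ * (ℓ + (α + β + 1))) / (ℓ:ℝ) ^ 2) atTop (𝓝 1) := by
    have h1 : Tendsto (fun ℓ : ℕ => ((ℓ:ℝ))⁻¹ * ((ℓ:ℝ))⁻¹ + (1 + (α + β + 1) * ((ℓ:ℝ))⁻¹))
        atTop (𝓝 (0 * 0 + (1 + (α+β+1) * 0))) :=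
      (h0.mul h0).add (tendsto_const_nhds.add (h0.const_mul _))
    norm_num at h1
    apply h1.congr'
    filter_upwards [eventually_ge_atTop 1] with n hn
    have hn0 : (0:ℝ) < n := by exact_mod_cast hn
    field_simp
  have hEp : Tendsto (fun ℓ : ℕ => ((1 + ℓ * (ℓ + (α + β + 1))) / (ℓ:ℝ) ^ 2) ^ p)
      atTop (𝓝 1) := by
    have := hE.rpow_const (Or.inr hp)
    rwa [Real.one_rpow] at this
  have hA := gammaRatio_tendsto (s := α + β) (by linarith)
  have hB := gammaRatio_tendsto (s := α) (by linarith)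
  have hD := gammaRatio_tendsto (s := β) (by linarith)
  -- the comparison function
  have hG : Tendsto (fun ℓ : ℕ =>
      C0 * ((2 * ℓ + (α + β + 1)) / (ℓ:ℝ)) *
        (Real.Gamma (ℓ + (α + β) + 1) / (Real.Gamma (ℓ + 1) * (ℓ:ℝ) ^ (α + β))) *
        (Real.Gamma (ℓ + α + 1) / (Real.Gamma (ℓ + 1) * (ℓ:ℝ) ^ α)) /
      ((Real.Gamma (ℓ + β + 1) / (Real.Gamma (ℓ + 1) * (ℓ:ℝ) ^ β)) *
        ((1 + ℓ * (ℓ + (α + β + 1))) / (ℓ:ℝ) ^ 2) ^ p))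
      atTop (𝓝 (C0 * 2 * 1 * 1 / (1 * 1))) := by
    exact (((tendsto_const_nhds.mul hF).mul hA).mul hB).div (hD.mul hEp) (by norm_num)
  rw [show C0 * 2 * 1 * 1 / (1 * 1) = 2 * C0 by ring] at hG
  have hT : Tendsto (fun ℓ : ℕ => (N ℓ / (1 + ℓ * (ℓ + α + β + 1)) ^ p) / (ℓ:ℝ) ^ r)
      atTop (𝓝 (2 * C0)) := by
    apply hG.congr'
    filter_upwards [eventually_ge_atTop 1] with n hn
    have hx : (0:ℝ) < n := by exact_mod_cast hn
    have hS : (0:ℝ) < 1 + n * ((n:ℝ) + (α + β + 1)) := by nlinarith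
    have hSp : (0:ℝ) < (1 + n * ((n:ℝ) + (α + β + 1))) ^ p := Real.rpow_pos_of_pos hS p
    have hΓ1 : 0 < Real.Gamma ((n:ℝ) + 1) := Real.Gamma_pos_of_pos (by linarith)
    have hΓd : 0 < Real.Gamma ((n:ℝ) + β + 1) := Real.Gamma_pos_of_pos (by linarith)
    have hxa : (0:ℝ) < (n:ℝ) ^ α := Real.rpow_pos_of_pos hx _
    have hxb : (0:ℝ) < (n:ℝ) ^ β := Real.rpow_pos_of_pos hx _
    have hxab : (0:ℝ) < (n:ℝ) ^ (α + β) := Real.rpow_pos_of_pos hx _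
    have hx2p : (0:ℝ) < (n:ℝ) ^ (2 * p) := Real.rpow_pos_of_pos hx _
    have hxr : (0:ℝ) < (n:ℝ) ^ r := Real.rpow_pos_of_pos hx _
    have hE2 : ((1 + n * ((n:ℝ) + (α + β + 1))) / (n:ℝ) ^ 2) ^ p
        = (1 + n * ((n:ℝ) + (α + β + 1))) ^ p / (n:ℝ) ^ (2 * p) := by
      rw [Real.div_rpow hS.le (by positivity)]
      congr 1
      rw [← Real.rpow_natCast (n:ℝ) 2, ← Real.rpow_mul hx.le]
      norm_num
    have hpow : (n:ℝ) ^ r * ((n:ℝ) ^ β * (n:ℝ) ^ (2 * p))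
        = (n:ℝ) ^ (1:ℝ) * ((n:ℝ) ^ (α + β) * (n:ℝ) ^ α) := by
      rw [← Real.rpow_add hx, ← Real.rpow_add hx, ← Real.rpow_add hx, ← Real.rpow_add hx]
      congr 1
      rw [hr]; ring
    rw [Real.rpow_one] at hpow
    rw [hN n, hE2, show (n:ℝ) + (α + β) + 1 = (n:ℝ) + α + β + 1 by ring,
      show (n:ℝ) + α + β + 1 = (n:ℝ) + (α + β + 1) by ring]
    have hc : C0 * (Real.Gamma (α + 1) * Real.Gamma (α + β + 2)) = Real.Gamma (β + 1) := by
      rw [hC0]; field_simp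
    have hr' : (n:ℝ) ^ r = (n:ℝ) * ((n:ℝ) ^ (α + β) * (n:ℝ) ^ α) / ((n:ℝ) ^ β * (n:ℝ) ^ (2 * p)) := by
      rw [eq_div_iff (by positivity), hpow]
    rw [hr', hC0]
    field_simp
    ring
  have := summable_iff_of_div_rpow_tendsto (by positivity : (0:ℝ) < 2 * C0) hT
  rw [this, hr]
  constructor <;> intro h <;> linarith
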